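/- (Projection onto the component r^{2s}·Har.) Let m ≥ 2 and let P be a complex polynomial in m variables, homogeneous of degree n, written as P = ∑_{j=0}^{⌊n/2⌋} r^{2j}·H_j with each H_j harmonic and homogeneous of degree n-2j. Then for every s ≤ ⌊n/2⌋ there exists a polynomial Q such that Δ^s P = 2^s · s! · (∏_{t=0}^{s-1}(2(n-2s) + m + 2t)) · H_s + r²·Q. -/

import Mathlib

open MvPolynomial Finset

noncomputable section

/-- The Laplacian `ΔP = ∑ ∂_i² P`. -/
def lap (m : ℕ) (P : MvPolynomial (Fin m) ℂ) : MvPolynomial (Fin m) ℂ :=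
  ∑ i, pderiv i (pderiv i P)

/-- The Euler operator `E P = ∑ X_i ∂_i P`. -/
def eulerOp (m : ℕ) (P : MvPolynomial (Fin m) ℂ) : MvPolynomial (Fin m) ℂ :=
  ∑ i, X i * pderiv i P

/-- The polynomial `r² = ∑ X_i²`. -/
def r2 (m : ℕ) : MvPolynomial (Fin m) ℂ := ∑ i, X i ^ 2

/-- The Fischer inner product `⟨P,Q⟩ = ∑_α (∏_i α_i!)·conj(coeff_α P)·coeff_α Q`. -/
def fischer (m : ℕ) (P Q : MvPolynomial (Fin m) ℂ) : ℂ :=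
  ∑ α ∈ P.support, (∏ i, ((α i).factorial : ℂ)) * (starRingEnd ℂ) (coeff α P) * coeff α Q

namespace Stmt4Aux

variable {m : ℕ}

lemma lap_smul (c : ℂ) (p : MvPolynomial (Fin m) ℂ) : lap m (c • p) = c • lap m p := by
  simp [lap, map_smul, Finset.smul_sum]

lemma lap_zero : lap m (0 : MvPolynomial (Fin m) ℂ) = 0 := by simp [lap]

lemma lap_sum {ι : Type*} (s : Finset ι) (f : ι → MvPolynomial (Fin m) ℂ) :
    lap m (∑ j ∈ s, f j) = ∑ j ∈ s, lap m (f j) := by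
  simp only [lap, map_sum]
  rw [Finset.sum_comm]

lemma lap_iter_smul (s : ℕ) (c : ℂ) (p : MvPolynomial (Fin m) ℂ) :
    (lap m)^[s] (c • p) = c • (lap m)^[s] p := by
  induction s generalizing p with
  | zero => simp
  | succ s ih => simp [Function.iterate_succ_apply, lap_smul, ih]

lemma lap_iter_zero (s : ℕ) : (lap m)^[s] (0 : MvPolynomial (Fin m) ℂ) = 0 := by
  induction s with
  | zero => simp
  | succ s ih => simp [Function.iterate_succ_apply, lap_zero, ih]

lemma lap_iter_sum {ι : Type*} (s : ℕ) (t : Finset ι) (f : ι → MvPolynomial (Fin m) ℂ) :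
    (lap m)^[s] (∑ j ∈ t, f j) = ∑ j ∈ t, (lap m)^[s] (f j) := by
  induction s generalizing f with
  | zero => simp
  | succ s ih => simp [Function.iterate_succ_apply, lap_sum, ih]

lemma eulerOp_sum {ι : Type*} (s : Finset ι) (f : ι → MvPolynomial (Fin m) ℂ) :
    eulerOp m (∑ j ∈ s, f j) = ∑ j ∈ s, eulerOp m (f j) := by
  simp only [eulerOp, map_sum, Finset.mul_sum]
  rw [Finset.sum_comm]

lemma pderiv_r2 (i : Fin m) : pderiv i (r2 m) = 2 * X i := by
  rw [r2, map_sum]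
  rw [Finset.sum_eq_single i]
  · simp [pderiv_pow]
  · intro j _ hji
    simp [pderiv_pow, pderiv_X_of_ne hji]
  · simp

lemma single_add_sub_cancel (α : Fin m →₀ ℕ) (i : Fin m) (h : 1 ≤ α i) :
    Finsupp.single i 1 + (α - Finsupp.single i 1) = α := by
  ext j
  simp only [Finsupp.add_apply, Finsupp.tsub_apply, Finsupp.single_apply]
  by_cases hj : i = j
  · subst hj; simpa using by omega
  · simp [hj]

lemma eulerOp_monomial (α : Fin m →₀ ℕ) (a : ℂ) :
    eulerOp m (monomial α a) = ((∑ i : Fin m, α i : ℕ) : ℂ) • monomial α a := by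
  rw [eulerOp]
  have key : ∀ i : Fin m, X i * pderiv i (monomial α a) = ((α i : ℕ) : ℂ) • monomial α a := by
    intro i
    rw [pderiv_monomial]
    by_cases h : α i = 0
    · simp [h]
    · have h1 : 1 ≤ α i := Nat.one_le_iff_ne_zero.mpr h
      rw [X, monomial_mul, one_mul, single_add_sub_cancel α i h1, smul_monomial]
      congr 1
      rw [smul_eq_mul]
      ring
  simp_rw [key, ← Finset.sum_smul]
  congr 1
  push_cast
  ring

lemma euler_identity {d : ℕ} {P : MvPolynomial (Fin m) ℂ} (h : P.IsHomogeneous d) :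
    eulerOp m P = (d : ℂ) • P := by
  conv_lhs => rw [P.as_sum]
  rw [eulerOp_sum]
  conv_rhs => rw [P.as_sum, Finset.smul_sum]
  refine Finset.sum_congr rfl fun α hα => ?_
  rw [eulerOp_monomial]
  congr 2
  have hc := h (mem_support_iff.mp hα)
  rw [← hc, ← Finsupp.degree_eq_sum, Finsupp.degree_eq_weight_one]
  rfl

lemma r2_isHomogeneous : (r2 m).IsHomogeneous 2 := by
  apply IsHomogeneous.sum
  intro i _
  simpa using (isHomogeneous_X ℂ i).pow 2

lemma lap_r2_mul (p : MvPolynomial (Fin m) ℂ) :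
    lap m (r2 m * p) = r2 m * lap m p + (4 : ℂ) • eulerOp m p + ((2 * m : ℕ) : ℂ) • p := by
  rw [lap]
  have key : ∀ i : Fin m, pderiv i (pderiv i (r2 m * p)) =
      r2 m * pderiv i (pderiv i p) + 4 * (X i * pderiv i p) + 2 * p := by
    intro i
    have h2 : (pderiv i) (2 : MvPolynomial (Fin m) ℂ) = 0 := by
      rw [← map_ofNat (C : ℂ →+* MvPolynomial (Fin m) ℂ) 2, pderiv_C]
    simp only [pderiv_mul, pderiv_r2, map_add, h2, zero_mul, pderiv_X_self, mul_one, zero_add]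
    ring
  simp_rw [key]
  rw [Finset.sum_add_distrib, Finset.sum_add_distrib, ← Finset.mul_sum, ← Finset.mul_sum,
    Finset.sum_const, Finset.card_univ, Fintype.card_fin]
  rw [lap, eulerOp]
  simp only [smul_eq_C_mul, nsmul_eq_mul, map_mul, map_natCast, map_ofNat]
  push_cast
  ring

lemma lap_r2pow_mul (d : ℕ) (h : MvPolynomial (Fin m) ℂ) (hhom : h.IsHomogeneous d)
    (hharm : lap m h = 0) (j : ℕ) :
    lap m (r2 m ^ (j + 1) * h)
      = ((2 * ((j : ℂ) + 1)) * (2 * ((j : ℂ) + 1) - 2 + m + 2 * d))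
          • (r2 m ^ j * h) := by
  induction j with
  | zero =>
    rw [pow_one, pow_zero, one_mul, lap_r2_mul, hharm, mul_zero,
      euler_identity hhom, zero_add, smul_smul, ← add_smul]
    congr 1
    push_cast
    ring
  | succ j ih =>
    have hhom' : (r2 m ^ (j + 1) * h).IsHomogeneous (2 * (j + 1) + d) := by
      have := (r2_isHomogeneous (m := m)).pow (j + 1)
      simpa [mul_comm] using this.mul hhom
    rw [pow_succ, mul_comm (r2 m ^ (j+1)) (r2 m), mul_assoc, lap_r2_mul, ih,
      euler_identity hhom']
    rw [mul_smul_comm, smul_smul, ← mul_assoc, ← pow_succ']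
    rw [← add_smul, ← add_smul]
    congr 1
    push_cast
    ring

lemma lap_iter_r2pow_mul (d : ℕ) (h : MvPolynomial (Fin m) ℂ) (hhom : h.IsHomogeneous d)
    (hharm : lap m h = 0) (s : ℕ) :
    ∀ j, s ≤ j → (lap m)^[s] (r2 m ^ j * h)
      = (∏ k ∈ range s, (2 * ((j : ℂ) - k)) * (2 * ((j : ℂ) - k) - 2 + m + 2 * d))
          • (r2 m ^ (j - s) * h) := by
  induction s with
  | zero => intro j _; simp
  | succ s ih =>
    intro j hj
    obtain ⟨j', rfl⟩ : ∃ j'', j = j'' + 1 := ⟨j - 1, by omega⟩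
    rw [Function.iterate_succ_apply, lap_r2pow_mul d h hhom hharm j', lap_iter_smul,
      ih j' (by omega), smul_smul, Finset.prod_range_succ']
    have hsub : j' + 1 - (s + 1) = j' - s := by omega
    rw [hsub]
    congr 1
    rw [mul_comm]
    congr 1
    · apply Finset.prod_congr rfl
      intro k _
      push_cast
      ring
    · push_cast
      ring

lemma prod_eq_target (s : ℕ) (a : ℂ) :
    (∏ k ∈ range s, (2 * ((s : ℂ) - k)) * (2 * ((s : ℂ) - k) - 2 + a))
      = 2 ^ s * (Nat.factorial s : ℂ) * ∏ t ∈ range s, (a + 2 * t) := by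
  set f : ℕ → ℂ := fun t => (2 * ((t : ℂ) + 1)) * (2 * (t : ℂ) + a) with hf
  have step : ∀ k ∈ range s,
      (2 * ((s : ℂ) - k)) * (2 * ((s : ℂ) - k) - 2 + a) = f (s - 1 - k) := by
    intro k hk
    have hk' : k < s := mem_range.mp hk
    have h1 : ((s - 1 - k : ℕ) : ℂ) = (s : ℂ) - 1 - k := by
      have he : s - 1 - k = s - (1 + k) := by omega
      rw [he, Nat.cast_sub (by omega)]
      push_cast
      ring
    rw [hf]
    simp only [h1]
    ring
  calc (∏ k ∈ range s, (2 * ((s : ℂ) - k)) * (2 * ((s : ℂ) - k) - 2 + a))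
      = ∏ k ∈ range s, f (s - 1 - k) := Finset.prod_congr rfl step
    _ = ∏ k ∈ range s, f k := Finset.prod_range_reflect f s
    _ = ∏ k ∈ range s, 2 * (((k : ℂ) + 1) * (a + 2 * k)) := by
        apply Finset.prod_congr rfl
        intro k _
        rw [hf]
        ring
    _ = 2 ^ s * (Nat.factorial s : ℂ) * ∏ t ∈ range s, (a + 2 * t) := by
        rw [Finset.prod_mul_distrib, Finset.prod_mul_distrib, Finset.prod_const,
          Finset.card_range]
        have hfact : (∏ t ∈ range s, ((t : ℂ) + 1)) = (Nat.factorial s : ℂ) := by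
          rw [← Finset.prod_range_add_one_eq_factorial s]
          push_cast
          rfl
        rw [hfact]
        ring

/-- The coefficient appearing when applying `lap^[s]` to `r2^j * H j`. -/
def coefC (m n s j : ℕ) : ℂ :=
  ∏ k ∈ range s, (2 * ((j : ℂ) - k)) * (2 * ((j : ℂ) - k) - 2 + m + 2 * ((n - 2 * j : ℕ) : ℂ))

end Stmt4Aux

open Stmt4Aux in
theorem stmt4 (m n : ℕ) (hm : 2 ≤ m) (P : MvPolynomial (Fin m) ℂ)
    (hP : P.IsHomogeneous n)
    (H : ℕ → MvPolynomial (Fin m) ℂ)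
    (hharm : ∀ j ≤ n / 2, lap m (H j) = 0)
    (hhom : ∀ j ≤ n / 2, (H j).IsHomogeneous (n - 2 * j))
    (hdecomp : P = ∑ j ∈ range (n / 2 + 1), r2 m ^ j * H j)
    (s : ℕ) (hs : s ≤ n / 2) :
    ∃ Q, (lap m)^[s] P
      = ((2 : ℂ) ^ s * (Nat.factorial s : ℂ)
          * ∏ t ∈ range s, (2 * ((n : ℂ) - 2 * (s : ℂ)) + (m : ℂ) + 2 * (t : ℂ))) • H s
        + r2 m * Q := by
  classical
  have hterm : ∀ j ∈ range (n / 2 + 1),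
      (lap m)^[s] (r2 m ^ j * H j)
        = (if j = s then (coefC m n s s) • H s else 0)
          + r2 m * (if s < j then coefC m n s j • (r2 m ^ (j - s - 1) * H j) else 0) := by
    intro j hj
    have hj' : j ≤ n / 2 := Nat.lt_succ_iff.mp (mem_range.mp hj)
    rcases lt_trichotomy j s with hlt | rfl | hgt
    · -- j < s : the iterated Laplacian kills the term
      have h0 := lap_iter_r2pow_mul (n - 2 * j) (H j) (hhom j hj') (hharm j hj') j j le_rfl
      simp only [Nat.sub_self, pow_zero, one_mul] at h0
      obtain ⟨t, rfl⟩ : ∃ t, s = t + 1 + j := ⟨s - j - 1, by omega⟩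
      rw [Function.iterate_add_apply, Function.iterate_add_apply, h0,
        Function.iterate_one, lap_smul, hharm j hj', smul_zero, lap_iter_zero]
      rw [if_neg (by omega : ¬ j = t + 1 + j), if_neg (by omega : ¬ t + 1 + j < j)]
      simp
    · -- j = s
      have h0 := lap_iter_r2pow_mul (n - 2 * j) (H j) (hhom j hj') (hharm j hj') j j le_rfl
      simp only [Nat.sub_self, pow_zero, one_mul] at h0
      rw [h0, if_pos rfl, if_neg (lt_irrefl j)]
      simp [coefC]
    · -- j > s
      have h0 := lap_iter_r2pow_mul (n - 2 * j) (H j) (hhom j hj') (hharm j hj') s j hgt.le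
      rw [h0]
      have hpow : r2 m ^ (j - s) = r2 m * r2 m ^ (j - s - 1) := by
        rw [← pow_succ']
        congr 1
        omega
      rw [hpow, if_neg (Nat.ne_of_gt hgt), if_pos hgt, zero_add, mul_smul_comm, mul_assoc]
      rfl
  refine ⟨∑ j ∈ range (n / 2 + 1),
    (if s < j then coefC m n s j • (r2 m ^ (j - s - 1) * H j) else 0), ?_⟩
  rw [hdecomp, lap_iter_sum, Finset.sum_congr rfl hterm, Finset.sum_add_distrib,
    ← Finset.mul_sum]
  congr 1
  rw [Finset.sum_ite_eq' (range (n / 2 + 1)) s, if_pos (mem_range.mpr (by omega))]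
  congr 1
  have h2le : 2 * s ≤ n := by omega
  have h2s : ((n - 2 * s : ℕ) : ℂ) = (n : ℂ) - 2 * s := by
    rw [Nat.cast_sub h2le]
    push_cast
    ring
  calc coefC m n s s
      = ∏ k ∈ range s, (2 * ((s : ℂ) - k))
          * (2 * ((s : ℂ) - k) - 2 + ((m : ℂ) + 2 * ((n - 2 * s : ℕ) : ℂ))) := by
        rw [coefC]
        apply Finset.prod_congr rfl
        intro k _
        ring
    _ = 2 ^ s * (Nat.factorial s : ℂ)
          * ∏ t ∈ range s, (((m : ℂ) + 2 * ((n - 2 * s : ℕ) : ℂ)) + 2 * t) :=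
        prod_eq_target s _
    _ = _ := by
        rw [h2s]
        congr 1
        apply Finset.prod_congr rfl
        intro t _
        ring

end
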